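/- Let 0 < s ≤ 1/2 and fix z₀ > 0. Then for every z > 0 with z ≠ z₀, ( h'(z) - h'(z₀) )² ≥ δ_h(z₀,z) · h''(z), i.e. the quotient Q(z) = (h'(z) - h'(z₀))² / ( δ_h(z₀,z) h''(z) ) satisfies Q(z) ≥ 1 for all z > 0, z ≠ z₀; moreover Q extends continuously to z = z₀ with value 2 (so Q is a continuous function of z > 0). -/

import Mathlib

open Set MeasureTheory
open scoped ENNReal

noncomputable section

/-- `h(z) = (s²/(1-s))|z|^{1/s}`. -/
def hFun (s z : ℝ) : ℝ := s ^ 2 / (1 - s) * |z| ^ (1 / s)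

/-- `h'(z) = (s/(1-s))|z|^{1/s-2} z` (with `h'(0)=0`). -/
def hDeriv (s z : ℝ) : ℝ := s / (1 - s) * |z| ^ (1 / s - 2) * z

/-- Monge–Ampère quasi-distance of `h`. -/
def deltaH (s z₀ z : ℝ) : ℝ := hFun s z - hFun s z₀ - hDeriv s z₀ * (z - z₀)

/-- Monge–Ampère quasi-distance of `φ(x)=|x|²/2` on `ℝⁿ`. -/
def deltaE (n : ℕ) (x₀ x : Fin n → ℝ) : ℝ := (∑ i, (x i - x₀ i) ^ 2) / 2

/-- Monge–Ampère quasi-distance of `Φ(x,z) = |x|²/2 + h(z)`. -/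
def deltaPhi (n : ℕ) (s : ℝ) (p q : (Fin n → ℝ) × ℝ) : ℝ :=
  deltaE n p.1 q.1 + deltaH s p.2 q.2

/-- Monge–Ampère section of `Φ` of radius `R` centered at `p`. -/
def sectPhi (n : ℕ) (s R : ℝ) (p : (Fin n → ℝ) × ℝ) : Set ((Fin n → ℝ) × ℝ) :=
  {q | deltaPhi n s p q < R}

/-- Monge–Ampère section of `h` of radius `R` centered at `z₀`. -/
def sectH (s R z₀ : ℝ) : Set ℝ := {z | deltaH s z₀ z < R}

/-- One-dimensional section of `t ↦ t²/2` of radius `R` centered at `t₀`. -/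
def sect1 (R t₀ : ℝ) : Set ℝ := {t | (t - t₀) ^ 2 / 2 < R}

/-- Monge–Ampère cube of radius `R` centered at `p`. -/
def cube (n : ℕ) (s R : ℝ) (p : (Fin n → ℝ) × ℝ) : Set ((Fin n → ℝ) × ℝ) :=
  {q | (∀ i, q.1 i ∈ sect1 R (p.1 i)) ∧ q.2 ∈ sectH s R p.2}

/-- Monge–Ampère measure of `Φ`: `μ_Φ(E) = ∫_E |z|^{1/s-2} dz dx`. -/
def muPhi (n : ℕ) (s : ℝ) (E : Set ((Fin n → ℝ) × ℝ)) : ℝ≥0∞ :=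
  ∫⁻ p in E, ENNReal.ofReal (|p.2| ^ (1 / s - 2))

/-- Monge–Ampère measure of `h`: `μ_h(I) = ∫_I |z|^{1/s-2} dz`. -/
def muH (s : ℝ) (I : Set ℝ) : ℝ≥0∞ :=
  ∫⁻ z in I, ENNReal.ofReal (|z| ^ (1 / s - 2))

/-- Second partial derivative `∂_{ij}` in the `x`-variables. -/
def Dxx (n : ℕ) (U : (Fin n → ℝ) × ℝ → ℝ) (i j : Fin n) (p : (Fin n → ℝ) × ℝ) : ℝ :=
  fderiv ℝ (fun y : Fin n → ℝ =>
    fderiv ℝ (fun y' : Fin n → ℝ => U (y', p.2)) y (Pi.single j 1)) p.1 (Pi.single i 1)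

/-- Second partial derivative `∂_{zz}`. -/
def Dzz (n : ℕ) (U : (Fin n → ℝ) × ℝ → ℝ) (p : (Fin n → ℝ) × ℝ) : ℝ :=
  deriv (fun w => deriv (fun w' => U (p.1, w')) w) p.2

/-- The extension operator `a^{ij}(x) ∂_{ij} + |z|^{2-1/s} ∂_{zz}`. -/
def extOp (n : ℕ) (s : ℝ) (A : (Fin n → ℝ) → Fin n → Fin n → ℝ)
    (U : (Fin n → ℝ) × ℝ → ℝ) (p : (Fin n → ℝ) × ℝ) : ℝ :=
  (∑ i, ∑ j, A p.1 i j * Dxx n U i j p) + |p.2| ^ (2 - 1 / s) * Dzz n U p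

/-- Bounded measurable, symmetric, uniformly elliptic coefficients on `Ω`. -/
def UniformlyElliptic (n : ℕ) (lam Lam : ℝ) (Ω : Set (Fin n → ℝ))
    (A : (Fin n → ℝ) → Fin n → Fin n → ℝ) : Prop :=
  (∀ i j, Measurable fun x => A x i j) ∧
  (∀ x i j, A x i j = A x j i) ∧
  (∀ x ∈ Ω, ∀ ξ : Fin n → ℝ,
    lam * ∑ i, ξ i ^ 2 ≤ ∑ i, ∑ j, A x i j * ξ i * ξ j ∧
    (∑ i, ∑ j, A x i j * ξ i * ξ j) ≤ Lam * ∑ i, ξ i ^ 2)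

/-- A paraboloid of opening `a > 0` with vertex `v`. -/
def IsParaboloid (n : ℕ) (s a : ℝ) (v : (Fin n → ℝ) × ℝ) (P : (Fin n → ℝ) × ℝ → ℝ) : Prop :=
  ∃ c : ℝ, ∀ p, P p = -a * deltaPhi n s v p + c

/-- `P` touches `U` from below at `p₀` in the set `S`. -/
def TouchesBelow (n : ℕ) (P U : (Fin n → ℝ) × ℝ → ℝ)
    (S : Set ((Fin n → ℝ) × ℝ)) (p₀ : (Fin n → ℝ) × ℝ) : Prop :=
  P p₀ = U p₀ ∧ ∀ p ∈ S, P p ≤ U p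

open Filter Topology

/-- auxiliary: normalized quasi-distance of `z ↦ z^p`. -/
def dlt (p a z : ℝ) : ℝ := (z ^ p - a ^ p) / p - a ^ (p - 1) * (z - a)

/-- auxiliary: derivative factor. -/
def gAux (p a z : ℝ) : ℝ :=
  2 / p * z ^ p + (p - 3) * a ^ (p - 1) * z - (p - 2) * (p - 1) / p * a ^ p

/-- auxiliary: the difference function. -/
def FAux (p a z : ℝ) : ℝ :=
  (z ^ (p - 1) - a ^ (p - 1)) ^ 2 / (p - 1) - z ^ (p - 2) * dlt p a z

lemma rp_sub {z : ℝ} (hz : 0 < z) (q : ℝ) (n : ℕ) :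
    z ^ (q - (n : ℝ)) = z ^ q / z ^ n := by
  rw [Real.rpow_sub hz, Real.rpow_natCast]

lemma hasDerivAt_FAux {p a : ℝ} (hp : 2 ≤ p) (ha : 0 < a) {z : ℝ} (hz : 0 < z) :
    HasDerivAt (FAux p a) (z ^ (p - 3) * gAux p a z) z := by
  have h0 : z ≠ 0 := hz.ne'
  have d1 : HasDerivAt (fun z : ℝ => z ^ (p - 1)) ((p - 1) * z ^ (p - 1 - 1)) z :=
    Real.hasDerivAt_rpow_const (Or.inl h0)
  have d2 : HasDerivAt (fun z : ℝ => z ^ (p - 2)) ((p - 2) * z ^ (p - 2 - 1)) z :=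
    Real.hasDerivAt_rpow_const (Or.inl h0)
  have d3 : HasDerivAt (fun z : ℝ => z ^ p) (p * z ^ (p - 1)) z :=
    Real.hasDerivAt_rpow_const (Or.inl h0)
  have dδ : HasDerivAt (fun z => dlt p a z)
      (p * z ^ (p - 1) / p - a ^ (p - 1) * 1) z := by
    exact ((d3.sub_const _).div_const p).sub (((hasDerivAt_id z).sub_const a).const_mul _)
  have dF : HasDerivAt (FAux p a)
      ((2 * (z ^ (p - 1) - a ^ (p - 1)) ^ 1 * ((p - 1) * z ^ (p - 1 - 1))) / (p - 1)
        - ((p - 2) * z ^ (p - 2 - 1) * dlt p a z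
            + z ^ (p - 2) * (p * z ^ (p - 1) / p - a ^ (p - 1) * 1))) z := by
    have := (((d1.sub_const (a ^ (p - 1))).pow 2).div_const (p - 1)).sub (d2.mul dδ)
    simp at this
    exact this.congr_deriv (by simp)
  convert dF using 1
  have hp0 : (0:ℝ) < p := by linarith
  have hp1 : p - 1 ≠ 0 := by intro h; nlinarith
  have e1 : z ^ (p - 1) = z ^ p / z ^ 1 := by
    have := rp_sub hz p 1; simpa using this
  have e2 : z ^ (p - 2) = z ^ p / z ^ 2 := by
    have := rp_sub hz p 2; simpa using this
  have e3 : z ^ (p - 3) = z ^ p / z ^ 3 := by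
    have := rp_sub hz p 3; simpa using this
  have e4 : a ^ (p - 1) = a ^ p / a ^ 1 := by
    have := rp_sub ha p 1; simpa using this
  have e5 : z ^ (p - 1 - 1) = z ^ p / z ^ 2 := by
    rw [show p - 1 - 1 = p - 2 by ring]; exact e2
  have e6 : z ^ (p - 2 - 1) = z ^ p / z ^ 3 := by
    rw [show p - 2 - 1 = p - 3 by ring]; exact e3
  unfold gAux dlt
  rw [e1, e2, e3, e4, e5, e6]
  field_simp
  ring
lemma gAux_sign {p a : ℝ} (hp : 2 ≤ p) (ha : 0 < a) {z : ℝ} (hz : 0 < z) :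
    (a ≤ z → 0 ≤ gAux p a z) ∧ (z ≤ a → gAux p a z ≤ 0) := by
  have hp0 : (0:ℝ) < p := by linarith
  have hA : (0:ℝ) < a ^ (p - 1) := Real.rpow_pos_of_pos ha _
  have hzp : z ^ p = z ^ (p - 1) * z := by
    rw [show p = p - 1 + 1 by ring, Real.rpow_add_one hz.ne']; ring_nf
  have hap : a ^ p = a ^ (p - 1) * a := by
    rw [show p = p - 1 + 1 by ring, Real.rpow_add_one ha.ne']; ring_nf
  have hzA : (0:ℝ) < z ^ (p - 1) := Real.rpow_pos_of_pos hz _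
  constructor
  · intro hza
    have key : a ^ (p - 1) ≤ z ^ (p - 1) :=
      Real.rpow_le_rpow ha.le hza (by linarith)
    have hnum : 0 ≤ p * gAux p a z := by
      unfold gAux
      rw [hzp, hap]
      have h1 : 0 ≤ 2 * z * (z ^ (p - 1) - a ^ (p - 1)) := by
        have := sub_nonneg.mpr key; positivity
      have h2 : 0 ≤ (p - 1) * (p - 2) * a ^ (p - 1) * (z - a) := by
        have := sub_nonneg.mpr hza
        have h3 : (0:ℝ) ≤ (p-1)*(p-2) := by nlinarith
        positivity
      field_simp
      nlinarith [h1, h2]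
    have : gAux p a z = p * gAux p a z / p := by field_simp
    rw [this]; exact div_nonneg hnum hp0.le
  · intro hza
    have key : z ^ (p - 1) ≤ a ^ (p - 1) :=
      Real.rpow_le_rpow hz.le hza (by linarith)
    have hnum : p * gAux p a z ≤ 0 := by
      unfold gAux
      rw [hzp, hap]
      have h1 : 0 ≤ 2 * z * (a ^ (p - 1) - z ^ (p - 1)) := by
        have := sub_nonneg.mpr key; positivity
      have h2 : 0 ≤ (p - 1) * (p - 2) * a ^ (p - 1) * (a - z) := by
        have := sub_nonneg.mpr hza
        have h3 : (0:ℝ) ≤ (p-1)*(p-2) := by nlinarith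
        positivity
      field_simp
      nlinarith [h1, h2]
    have : gAux p a z = p * gAux p a z / p := by field_simp
    rw [this]; exact div_nonpos_of_nonpos_of_nonneg hnum hp0.le
lemma hasDerivAt_dlt {p a : ℝ} (hp : 2 ≤ p) {z : ℝ} (hz : 0 < z) :
    HasDerivAt (dlt p a) (z ^ (p - 1) - a ^ (p - 1)) z := by
  have hp0 : (0:ℝ) < p := by linarith
  have d3 : HasDerivAt (fun z : ℝ => z ^ p) (p * z ^ (p - 1)) z :=
    Real.hasDerivAt_rpow_const (Or.inl hz.ne')
  have := ((d3.sub_const (a ^ p)).div_const p).sub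
    (((hasDerivAt_id z).sub_const a).const_mul (a ^ (p - 1)))
  refine this.congr_deriv ?_
  field_simp

lemma dlt_pos {p a : ℝ} (hp : 2 ≤ p) (ha : 0 < a) {z : ℝ} (hz : 0 < z) (hne : z ≠ a) :
    0 < dlt p a z := by
  have hp1 : (0:ℝ) < p - 1 := by linarith
  have hda : dlt p a a = 0 := by unfold dlt; ring
  have hcont : ∀ x ∈ Ioi (0:ℝ), ContinuousAt (dlt p a) x := fun x hx =>
    (hasDerivAt_dlt hp hx).continuousAt
  rcases lt_or_gt_of_ne hne with h | h
  · -- z < a : strictly decreasing on Ioc 0 a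
    have hanti : StrictAntiOn (dlt p a) (Ioc 0 a) := by
      apply strictAntiOn_of_deriv_neg (convex_Ioc 0 a)
      · exact fun x hx => (hcont x hx.1).continuousWithinAt
      · intro x hx
        rw [interior_Ioc] at hx
        rw [(hasDerivAt_dlt hp hx.1).deriv]
        have : x ^ (p - 1) < a ^ (p - 1) :=
          Real.rpow_lt_rpow (le_of_lt hx.1) hx.2 hp1
        linarith
    have := hanti ⟨hz, h.le⟩ ⟨ha, le_refl a⟩ h
    rwa [hda] at this
  · -- a < z : strictly increasing on Ici a
    have hmono : StrictMonoOn (dlt p a) (Ici a) := by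
      apply strictMonoOn_of_deriv_pos (convex_Ici a)
      · exact fun x hx => (hcont x (lt_of_lt_of_le ha hx)).continuousWithinAt
      · intro x hx
        rw [interior_Ici] at hx
        rw [(hasDerivAt_dlt hp (lt_trans ha hx)).deriv]
        have : a ^ (p - 1) < x ^ (p - 1) :=
          Real.rpow_lt_rpow ha.le hx hp1
        linarith
    have := hmono (self_mem_Ici) (le_of_lt h) h
    rwa [hda] at this

lemma FAux_eq_zero {p a : ℝ} : FAux p a a = 0 := by
  unfold FAux dlt; ring

lemma FAux_nonneg {p a : ℝ} (hp : 2 ≤ p) (ha : 0 < a) {z : ℝ} (hz : 0 < z) :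
    0 ≤ FAux p a z := by
  rcases le_total a z with h | h
  · have hmono : MonotoneOn (FAux p a) (Ici a) := by
      apply monotoneOn_of_deriv_nonneg (convex_Ici a)
      · exact fun x hx => (hasDerivAt_FAux hp ha (lt_of_lt_of_le ha hx)).continuousAt.continuousWithinAt
      · intro x hx
        rw [interior_Ici] at hx
        exact (hasDerivAt_FAux hp ha (lt_trans ha hx)).differentiableAt.differentiableWithinAt
      · intro x hx
        rw [interior_Ici] at hx
        have hx0 : 0 < x := lt_trans ha hx
        rw [(hasDerivAt_FAux hp ha hx0).deriv]
        exact mul_nonneg (Real.rpow_pos_of_pos hx0 _).le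
          ((gAux_sign hp ha hx0).1 hx.le)
    have := hmono self_mem_Ici h h
    rwa [FAux_eq_zero] at this
  · have hanti : AntitoneOn (FAux p a) (Ioc 0 a) := by
      apply antitoneOn_of_deriv_nonpos (convex_Ioc 0 a)
      · exact fun x hx => (hasDerivAt_FAux hp ha hx.1).continuousAt.continuousWithinAt
      · intro x hx
        rw [interior_Ioc] at hx
        exact (hasDerivAt_FAux hp ha hx.1).differentiableAt.differentiableWithinAt
      · intro x hx
        rw [interior_Ioc] at hx
        rw [(hasDerivAt_FAux hp ha hx.1).deriv]
        exact mul_nonpos_of_nonneg_of_nonpos (Real.rpow_pos_of_pos hx.1 _).le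
          ((gAux_sign hp ha hx.1).2 hx.2.le)
    have := hanti ⟨hz, h⟩ ⟨ha, le_refl a⟩ h
    rwa [FAux_eq_zero] at this
lemma hFun_pos_eq {s z : ℝ} (hz : 0 < z) : hFun s z = s ^ 2 / (1 - s) * z ^ (1 / s) := by
  unfold hFun; rw [abs_of_pos hz]

lemma hDeriv_pos_eq {s z : ℝ} (hz : 0 < z) : hDeriv s z = s / (1 - s) * z ^ (1 / s - 1) := by
  unfold hDeriv
  rw [abs_of_pos hz, show (1:ℝ) / s - 1 = 1 / s - 2 + 1 by ring, Real.rpow_add_one hz.ne']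
  ring

lemma deltaH_pos_eq {s a z : ℝ} (hs0 : 0 < s) (hs1 : s < 1) (ha : 0 < a) (hz : 0 < z) :
    deltaH s a z = s / (1 - s) * dlt (1 / s) a z := by
  unfold deltaH dlt
  rw [hFun_pos_eq hz, hFun_pos_eq ha, hDeriv_pos_eq ha]
  have h1 : s ≠ 0 := hs0.ne'
  have h2 : (1:ℝ) - s ≠ 0 := by intro h; linarith
  field_simp

lemma hasDerivAt_hFun {s z : ℝ} (hs0 : 0 < s) (hs1 : s < 1) (hz : 0 < z) :
    HasDerivAt (hFun s) (hDeriv s z) z := by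
  have d : HasDerivAt (fun w : ℝ => s ^ 2 / (1 - s) * w ^ (1 / s))
      (s ^ 2 / (1 - s) * (1 / s * z ^ (1 / s - 1))) z :=
    (Real.hasDerivAt_rpow_const (Or.inl hz.ne')).const_mul _
  have ev : hFun s =ᶠ[nhds z] fun w => s ^ 2 / (1 - s) * w ^ (1 / s) := by
    filter_upwards [eventually_gt_nhds hz] with w hw
    exact hFun_pos_eq hw
  have := d.congr_of_eventuallyEq ev
  refine this.congr_deriv ?_
  rw [hDeriv_pos_eq hz]
  have h1 : s ≠ 0 := hs0.ne'
  have h2 : (1:ℝ) - s ≠ 0 := by intro h; linarith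
  field_simp

lemma hasDerivAt_deltaH {s a z : ℝ} (hs0 : 0 < s) (hs1 : s < 1) (hz : 0 < z) :
    HasDerivAt (deltaH s a) (hDeriv s z - hDeriv s a) z := by
  have := ((hasDerivAt_hFun hs0 hs1 hz).sub_const (hFun s a)).sub
    (((hasDerivAt_id z).sub_const a).const_mul (hDeriv s a))
  refine this.congr_deriv ?_
  ring
/-- Lemma 7.1: for `0 < s ≤ 1/2` and `z₀ > 0`, the quotient
`Q(z) = (h'(z) - h'(z₀))² / (δ_h(z₀,z) h''(z))` satisfies `Q ≥ 1` for `z > 0`, and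
extends continuously to `z = z₀` with value `2`. -/
theorem quotient_ge_one
    (s : ℝ) (hs0 : 0 < s) (hs : s ≤ 1 / 2) (z₀ : ℝ) (hz₀ : 0 < z₀) :
    (∀ z : ℝ, 0 < z → z ≠ z₀ →
      deltaH s z₀ z * z ^ (1 / s - 2) ≤ (hDeriv s z - hDeriv s z₀) ^ 2) ∧
    (∀ z : ℝ, 0 < z →
      1 ≤ (if z = z₀ then (2 : ℝ)
        else (hDeriv s z - hDeriv s z₀) ^ 2 / (deltaH s z₀ z * z ^ (1 / s - 2)))) ∧
    ContinuousOn
      (fun z : ℝ => if z = z₀ then (2 : ℝ)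
        else (hDeriv s z - hDeriv s z₀) ^ 2 / (deltaH s z₀ z * z ^ (1 / s - 2)))
      (Ioi (0 : ℝ)) := by
  have hs1 : s < 1 := by linarith
  have h1s : (0:ℝ) < 1 - s := by linarith
  have hsne : s ≠ 0 := hs0.ne'
  have h1sne : (1:ℝ) - s ≠ 0 := h1s.ne'
  have hp : 2 ≤ 1 / s := by rw [le_div_iff₀ hs0]; linarith
  have hα : 0 < s / (1 - s) := div_pos hs0 h1s
  have hp1 : (0:ℝ) < 1 / s - 1 := by linarith
  have hp1ne : (1:ℝ)/s - 1 ≠ 0 := hp1.ne'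
  have hαp : s / (1 - s) = 1 / (1 / s - 1) := by field_simp
  have part1 : ∀ z : ℝ, 0 < z → z ≠ z₀ →
      deltaH s z₀ z * z ^ (1 / s - 2) ≤ (hDeriv s z - hDeriv s z₀) ^ 2 := by
    intro z hz _
    have key := FAux_nonneg hp hz₀ hz
    unfold FAux at key
    rw [deltaH_pos_eq hs0 hs1 hz₀ hz, hDeriv_pos_eq hz, hDeriv_pos_eq hz₀]
    have hkey : z ^ (1/s - 2) * dlt (1/s) z₀ z
        ≤ (z ^ (1/s - 1) - z₀ ^ (1/s - 1))^2 / (1/s - 1) := by linarith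
    have h4 : (z ^ (1/s - 1) - z₀ ^ (1/s - 1))^2 / (1/s - 1)
        = s/(1-s) * (z ^ (1/s - 1) - z₀ ^ (1/s - 1))^2 := by rw [hαp]; ring
    calc s/(1-s) * dlt (1/s) z₀ z * z ^ (1/s - 2)
        = s/(1-s) * (z ^ (1/s - 2) * dlt (1/s) z₀ z) := by ring
      _ ≤ s/(1-s) * ((z ^ (1/s - 1) - z₀ ^ (1/s - 1))^2 / (1/s - 1)) :=
          mul_le_mul_of_nonneg_left hkey hα.le
      _ = (s/(1-s) * z ^ (1/s - 1) - s/(1-s) * z₀ ^ (1/s - 1))^2 := by rw [h4]; ring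
  have hDpos : ∀ z : ℝ, 0 < z → z ≠ z₀ → 0 < deltaH s z₀ z * z ^ (1 / s - 2) := by
    intro z hz hne
    rw [deltaH_pos_eq hs0 hs1 hz₀ hz]
    exact mul_pos (mul_pos hα (dlt_pos hp hz₀ hz hne)) (Real.rpow_pos_of_pos hz _)
  refine ⟨part1, ?_, ?_⟩
  · intro z hz
    by_cases hne : z = z₀
    · rw [if_pos hne]; norm_num
    · rw [if_neg hne]
      exact (one_le_div (hDpos z hz hne)).mpr (part1 z hz hne)
  · intro z hzmem
    have hz : (0:ℝ) < z := hzmem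
    by_cases hne : z = z₀
    case neg =>
      apply ContinuousAt.continuousWithinAt
      have hcontD : ContinuousAt (hDeriv s) z := by
        show ContinuousAt (fun w => s / (1 - s) * |w| ^ (1 / s - 2) * w) z
        have h1 : ContinuousAt (fun w : ℝ => |w| ^ (1 / s - 2)) z :=
          (Real.continuousAt_rpow_const _ _ (Or.inr (by linarith))).comp
            continuous_abs.continuousAt
        exact (h1.const_mul _).mul continuousAt_id
      have hcontF : ContinuousAt (hFun s) z := by
        show ContinuousAt (fun w => s ^ 2 / (1 - s) * |w| ^ (1 / s)) z
        have h1 : ContinuousAt (fun w : ℝ => |w| ^ (1 / s)) z :=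
          (Real.continuousAt_rpow_const _ _ (Or.inr (by positivity))).comp
            continuous_abs.continuousAt
        exact h1.const_mul _
      have hcontΔ : ContinuousAt (deltaH s z₀) z := by
        show ContinuousAt (fun w => hFun s w - hFun s z₀ - hDeriv s z₀ * (w - z₀)) z
        exact (hcontF.sub continuousAt_const).sub
          (continuousAt_const.mul (continuousAt_id.sub continuousAt_const))
      have hcontDen : ContinuousAt (fun w => deltaH s z₀ w * w ^ (1 / s - 2)) z :=
        hcontΔ.mul (Real.continuousAt_rpow_const z _ (Or.inr (by linarith)))
      have hdiv : ContinuousAt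
          (fun w => (hDeriv s w - hDeriv s z₀) ^ 2 / (deltaH s z₀ w * w ^ (1 / s - 2))) z :=
        ContinuousAt.div ((hcontD.sub continuousAt_const).pow 2) hcontDen
          (ne_of_gt (hDpos z hz hne))
      apply hdiv.congr
      filter_upwards [isOpen_compl_singleton.eventually_mem
        (by exact hne : z ∈ ({z₀}ᶜ : Set ℝ))] with w hw
      rw [if_neg (show w ≠ z₀ from hw)]
    case pos =>
      subst hne
      apply ContinuousAt.continuousWithinAt
      unfold ContinuousAt
      rw [show ((fun w : ℝ => if w = z then (2:ℝ)
          else (hDeriv s w - hDeriv s z) ^ 2 / (deltaH s z w * w ^ (1 / s - 2))) z) = 2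
        from by simp, ← nhdsNE_sup_pure z, tendsto_sup]
      constructor
      · set c := z ^ (1/s - 2) with hc
        have hcpos : 0 < c := Real.rpow_pos_of_pos hz _
        have hev_pos : ∀ᶠ w in nhdsWithin z {z}ᶜ, (0:ℝ) < w :=
          eventually_nhdsWithin_of_eventually_nhds (eventually_gt_nhds hz)
        have hev_ne : ∀ᶠ w in nhdsWithin z {z}ᶜ, w ≠ z := by
          filter_upwards [self_mem_nhdsWithin] with w hw
          exact hw
        have dh : HasDerivAt (hDeriv s) c z := by
          have d : HasDerivAt (fun w : ℝ => s/(1-s) * w ^ (1/s - 1))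
              (s/(1-s) * ((1/s - 1) * z ^ (1/s - 1 - 1))) z :=
            (Real.hasDerivAt_rpow_const (Or.inl hz.ne')).const_mul _
          have ev : hDeriv s =ᶠ[nhds z] fun w => s/(1-s) * w ^ (1/s - 1) := by
            filter_upwards [eventually_gt_nhds hz] with w hw
            exact hDeriv_pos_eq hw
          have := d.congr_of_eventuallyEq ev
          refine this.congr_deriv ?_
          rw [hc, show (1:ℝ)/s - 1 - 1 = 1/s - 2 by ring, hαp]
          field_simp
        have L1 : Tendsto (fun w => (hDeriv s w - hDeriv s z)/(w - z))
            (nhdsWithin z {z}ᶜ) (nhds c) := by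
          have h := hasDerivAt_iff_tendsto_slope.mp dh
          exact h.congr fun w => slope_def_field _ _ _
        have hff' : ∀ᶠ w in nhdsWithin z {z}ᶜ,
            HasDerivAt (deltaH s z) (hDeriv s w - hDeriv s z) w := by
          filter_upwards [hev_pos] with w hw
          exact hasDerivAt_deltaH hs0 hs1 hw
        have hgg' : ∀ᶠ w in nhdsWithin z {z}ᶜ,
            HasDerivAt (fun w : ℝ => (w - z)^2) (2*(w - z)) w := by
          filter_upwards with w
          have := ((hasDerivAt_id w).sub_const z).pow 2
          simp at this
          exact this.congr_deriv (by simp)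
        have hg' : ∀ᶠ w in nhdsWithin z {z}ᶜ, 2*(w - z) ≠ 0 := by
          filter_upwards [hev_ne] with w hw
          intro h
          exact hw (by linarith [sub_eq_zero.mp (by linarith : w - z = 0)])
        have hfa : Tendsto (deltaH s z) (nhdsWithin z {z}ᶜ) (nhds 0) := by
          have h0 : deltaH s z z = 0 := by unfold deltaH; ring
          have := (hasDerivAt_deltaH hs0 hs1 hz (a := z)).continuousAt.tendsto
          rw [h0] at this
          exact this.mono_left nhdsWithin_le_nhds
        have hga : Tendsto (fun w : ℝ => (w - z)^2) (nhdsWithin z {z}ᶜ) (nhds 0) := by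
          have h : ContinuousAt (fun w : ℝ => (w - z)^2) z := by fun_prop
          have := h.tendsto
          simp only [sub_self] at this
          norm_num at this
          exact this.mono_left nhdsWithin_le_nhds
        have hdiv : Tendsto (fun w => (hDeriv s w - hDeriv s z)/(2*(w - z)))
            (nhdsWithin z {z}ᶜ) (nhds (c/2)) := by
          have := L1.div_const 2
          exact this.congr fun w => by rw [div_div, mul_comm]
        have L2 : Tendsto (fun w => deltaH s z w / (w - z)^2)
            (nhdsWithin z {z}ᶜ) (nhds (c/2)) :=
          HasDerivAt.lhopital_zero_nhdsNE hff' hgg' hg' hfa hga hdiv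
        have L3 : Tendsto (fun w : ℝ => w ^ (1/s - 2)) (nhdsWithin z {z}ᶜ) (nhds c) :=
          ((Real.continuousAt_rpow_const z _ (Or.inr (by linarith))).tendsto).mono_left
            nhdsWithin_le_nhds
        have hden_ne : c/2 * c ≠ 0 := by positivity
        have T : Tendsto (fun w => ((hDeriv s w - hDeriv s z)/(w - z))^2 /
              (deltaH s z w/(w - z)^2 * w ^ (1/s - 2)))
            (nhdsWithin z {z}ᶜ) (nhds (c^2 / (c/2 * c))) :=
          (L1.pow 2).div (L2.mul L3) hden_ne
        have hval : c^2/(c/2*c) = 2 := by field_simp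
        rw [hval] at T
        apply T.congr'
        filter_upwards [hev_pos, hev_ne] with w hw hwne
        rw [if_neg hwne]
        have hΔpos : 0 < deltaH s z w := by
          rw [deltaH_pos_eq hs0 hs1 hz hw]
          exact mul_pos hα (dlt_pos hp hz hw hwne)
        have hwz : w - z ≠ 0 := sub_ne_zero.mpr hwne
        have hwp : (0:ℝ) < w ^ (1/s - 2) := Real.rpow_pos_of_pos hw _
        field_simp
      · rw [tendsto_pure_left]
        intro sset hset
        simpa using mem_of_mem_nhds hset
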